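/- arXiv:2308.00895 — 2 statements merged into one kernel-verified Lean document; each statement's English description precedes it below -/
import Mathlib

section
/- Let (X, B, P_0) be a probability space, {P_θ : θ ∈ Θ} a family of probability measures each absolutely continuous with respect to P_0, and B_0 ⊆ B a sub-σ-field. Let S_{B_0} = span{E_0[dP_θ/dP_0 | B_0] : θ ∈ Θ} ⊆ L¹(B_0, P_0). Then B_0 is boundedly complete (every bounded B_0-measurable Y with E_θ[Y] = 0 for all θ is P_0-a.s. zero) if and only if S_{B_0} is dense in L¹(B_0, P_0). -/
open MeasureTheory

open scoped ENNReal

section Rep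
variable {α : Type*} [MeasurableSpace α] (μ : Measure α) [IsProbabilityMeasure μ]

lemma l1_dual_rep (φ : Lp ℝ 1 μ →L[ℝ] ℝ) :
    ∃ Y : α → ℝ, StronglyMeasurable Y ∧ (∀ x, |Y x| ≤ ‖φ‖) ∧
      ∀ f : Lp ℝ 1 μ, φ f = ∫ x, Y x * f x ∂μ := by
  have h12 : (1 : ℝ≥0∞) ≤ 2 := by norm_num
  -- the inclusion L² → L¹
  let incl : Lp ℝ 2 μ → Lp ℝ 1 μ := fun f => ((Lp.memLp f).mono_exponent h12).toLp f
  have incl_coe : ∀ f : Lp ℝ 2 μ, ⇑(incl f) =ᵐ[μ] ⇑f := fun f => MemLp.coeFn_toLp _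
  have incl_add : ∀ f g : Lp ℝ 2 μ, incl (f + g) = incl f + incl g := by
    intro f g
    refine Lp.ext ?_
    filter_upwards [incl_coe (f + g), incl_coe f, incl_coe g, Lp.coeFn_add f g,
      Lp.coeFn_add (incl f) (incl g)] with x h1 h2 h3 h4 h5
    rw [h1, h5, h4]; simp [Pi.add_apply, h2, h3]
  have incl_smul : ∀ (a : ℝ) (f : Lp ℝ 2 μ), incl (a • f) = a • incl f := by
    intro a f
    refine Lp.ext ?_
    filter_upwards [incl_coe (a • f), incl_coe f, Lp.coeFn_smul a f,
      Lp.coeFn_smul a (incl f)] with x h1 h2 h3 h4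
    rw [h1, h4, h3]; simp [Pi.smul_apply, h2]
  have incl_norm : ∀ f : Lp ℝ 2 μ, ‖incl f‖ ≤ ‖f‖ := by
    intro f
    rw [Lp.norm_toLp, Lp.norm_def]
    exact ENNReal.toReal_mono (Lp.eLpNorm_ne_top f)
      (eLpNorm_le_eLpNorm_of_exponent_le h12 (Lp.aestronglyMeasurable f))
  let inclL : Lp ℝ 2 μ →L[ℝ] Lp ℝ 1 μ :=
    LinearMap.mkContinuous
      { toFun := incl, map_add' := incl_add, map_smul' := incl_smul } 1
      (fun f => by simpa using incl_norm f)
  have inclL_coe : ∀ f : Lp ℝ 2 μ, ⇑(inclL f) =ᵐ[μ] ⇑f := incl_coe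
  let ψ : StrongDual ℝ (Lp ℝ 2 μ) := φ.comp inclL
  let G : Lp ℝ 2 μ := (InnerProductSpace.toDual ℝ (Lp ℝ 2 μ)).symm ψ
  have hG : ∀ f : Lp ℝ 2 μ, φ (inclL f) = ∫ x, G x * f x ∂μ := by
    intro f
    have h1 : (inner ℝ G f : ℝ) = ψ f := InnerProductSpace.toDual_symm_apply
    have h2 : (inner ℝ G f : ℝ) = ∫ x, G x * f x ∂μ := by
      rw [L2.inner_def]; simp [RCLike.inner_apply, mul_comm]
    rw [← h2, h1]; rfl
  have hGint : Integrable (⇑G) μ :=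
    memLp_one_iff_integrable.mp ((Lp.memLp G).mono_exponent h12)
  set c : ℝ := ‖φ‖ with hc
  have hc0 : 0 ≤ c := norm_nonneg φ
  -- set integral bound
  have hset : ∀ s : Set α, MeasurableSet s → |∫ x in s, G x ∂μ| ≤ c * (μ s).toReal := by
    intro s hs
    have hμs : μ s ≠ ∞ := measure_ne_top μ s
    set f2 : Lp ℝ 2 μ := indicatorConstLp 2 hs hμs (1 : ℝ) with hf2
    have coe2 : ⇑f2 =ᵐ[μ] s.indicator fun _ => (1 : ℝ) := indicatorConstLp_coeFn
    have hval : φ (inclL f2) = ∫ x in s, G x ∂μ := by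
      rw [hG f2, ← integral_indicator hs]
      refine integral_congr_ae ?_
      filter_upwards [coe2] with x hx
      rw [hx]
      by_cases hxs : x ∈ s <;> simp [Set.indicator_of_mem, Set.indicator_of_notMem, hxs]
    have hnorm : ‖inclL f2‖ ≤ (μ s).toReal := by
      rw [show ‖inclL f2‖ = ‖incl f2‖ from rfl, Lp.norm_toLp]
      rw [eLpNorm_congr_ae coe2, eLpNorm_indicator_const hs one_ne_zero ENNReal.one_ne_top]
      simp
    calc |∫ x in s, G x ∂μ| = ‖φ (inclL f2)‖ := by rw [hval]; rfl
      _ ≤ ‖φ‖ * ‖inclL f2‖ := φ.le_opNorm _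
      _ ≤ c * (μ s).toReal := by
          exact mul_le_mul_of_nonneg_left hnorm hc0
  -- a.e. bound on G
  have hupper : ∀ᵐ x ∂μ, G x ≤ c := by
    have h := ae_nonneg_of_forall_setIntegral_nonneg ((integrable_const c).sub hGint) ?_
    · filter_upwards [h] with x hx; simpa using hx
    · intro s hs _
      simp only [Pi.sub_apply]
      rw [integral_sub (integrable_const c).integrableOn hGint.integrableOn,
        setIntegral_const]
      have := (abs_le.mp (hset s hs)).2
      simp only [smul_eq_mul, measureReal_def]
      linarith
  have hlower : ∀ᵐ x ∂μ, -c ≤ G x := by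
    have h := ae_nonneg_of_forall_setIntegral_nonneg (hGint.add (integrable_const c)) ?_
    · filter_upwards [h] with x hx
      simp only [Pi.zero_apply, Pi.add_apply] at hx
      linarith
    · intro s hs _
      simp only [Pi.add_apply]
      rw [integral_add hGint.integrableOn (integrable_const c).integrableOn,
        setIntegral_const]
      have := (abs_le.mp (hset s hs)).1
      simp only [smul_eq_mul, measureReal_def]
      linarith
  have habs : ∀ᵐ x ∂μ, |G x| ≤ c := by
    filter_upwards [hupper, hlower] with x h1 h2; exact abs_le.mpr ⟨h2, h1⟩
  -- strongly measurable truncated representative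
  obtain ⟨G0, G0sm, hG0⟩ : ∃ G0 : α → ℝ, StronglyMeasurable G0 ∧ ⇑G =ᵐ[μ] G0 :=
    ⟨(Lp.aestronglyMeasurable G).mk _, (Lp.aestronglyMeasurable G).stronglyMeasurable_mk,
      (Lp.aestronglyMeasurable G).ae_eq_mk⟩
  set Y : α → ℝ := fun x => min c (max (-c) (G0 x)) with hY
  have Ysm : StronglyMeasurable Y :=
    (measurable_const.min (measurable_const.max G0sm.measurable)).stronglyMeasurable
  have Ybd : ∀ x, |Y x| ≤ c := by
    intro x
    rw [abs_le]
    constructor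
    · exact le_min (by linarith) (le_max_left _ _) |>.trans (le_refl _) |> fun h => h
    · exact min_le_left _ _
  have hYG : Y =ᵐ[μ] ⇑G := by
    filter_upwards [hG0, habs] with x h1 h2
    rw [hY]
    simp only
    rw [← h1]
    rcases abs_le.mp h2 with ⟨hl, hu⟩
    rw [max_eq_right hl, min_eq_right hu]
  -- the functional f ↦ ∫ Y f on L¹
  have hRint : ∀ f : Lp ℝ 1 μ, Integrable (fun x => Y x * f x) μ := fun f =>
    (L1.integrable_coeFn f).bdd_mul Ysm.aestronglyMeasurable
      (Filter.Eventually.of_forall fun x => by simpa using Ybd x)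
  let Rlin : Lp ℝ 1 μ →ₗ[ℝ] ℝ :=
    { toFun := fun f => ∫ x, Y x * f x ∂μ
      map_add' := by
        intro f g
        have h1 : ∀ᵐ x ∂μ, Y x * (f + g : Lp ℝ 1 μ) x = Y x * f x + Y x * g x := by
          filter_upwards [Lp.coeFn_add f g] with x hx
          rw [hx, Pi.add_apply]; ring
        show (∫ x, Y x * (f + g : Lp ℝ 1 μ) x ∂μ) = (∫ x, Y x * f x ∂μ) + ∫ x, Y x * g x ∂μ
        rw [integral_congr_ae h1, integral_add (hRint f) (hRint g)]
      map_smul' := by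
        intro a f
        have h1 : ∀ᵐ x ∂μ, Y x * (a • f : Lp ℝ 1 μ) x = a * (Y x * f x) := by
          filter_upwards [Lp.coeFn_smul a f] with x hx
          rw [hx, Pi.smul_apply, smul_eq_mul]; ring
        show (∫ x, Y x * (a • f : Lp ℝ 1 μ) x ∂μ) = a • ∫ x, Y x * f x ∂μ
        rw [integral_congr_ae h1, integral_const_mul, smul_eq_mul] }
  let R : Lp ℝ 1 μ →L[ℝ] ℝ := LinearMap.mkContinuous Rlin c (by
    intro f
    have h1 : ‖Rlin f‖ ≤ ∫ x, ‖Y x * f x‖ ∂μ := by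
      show ‖∫ x, Y x * f x ∂μ‖ ≤ _
      exact norm_integral_le_integral_norm _
    have h2 : ∫ x, ‖Y x * f x‖ ∂μ ≤ ∫ x, c * ‖f x‖ ∂μ := by
      refine integral_mono_ae (hRint f).norm ((L1.integrable_coeFn f).norm.const_mul c) ?_
      refine Filter.Eventually.of_forall fun x => ?_
      show ‖Y x * f x‖ ≤ c * ‖f x‖
      rw [norm_mul]
      exact mul_le_mul_of_nonneg_right (by simpa using Ybd x) (norm_nonneg _)
    calc ‖Rlin f‖ ≤ ∫ x, c * ‖f x‖ ∂μ := h1.trans h2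
      _ = c * ∫ x, ‖f x‖ ∂μ := integral_const_mul _ _
      _ = c * ‖f‖ := by rw [L1.norm_eq_integral_norm])
  -- φ and R agree on images of L² functions
  have hkey : ∀ f : Lp ℝ 2 μ, φ (inclL f) = R (inclL f) := by
    intro f
    rw [hG f]
    have : R (inclL f) = ∫ x, Y x * f x ∂μ := by
      refine integral_congr_ae ?_
      filter_upwards [inclL_coe f] with x hx
      rw [hx]
    rw [this]
    refine integral_congr_ae ?_
    filter_upwards [hYG] with x hx
    rw [hx]
  -- simple functions are in the range of inclL
  have hsimple : ∀ s : Lp.simpleFunc ℝ 1 μ, φ (s : Lp ℝ 1 μ) = R (s : Lp ℝ 1 μ) := by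
    intro s
    set sf := Lp.simpleFunc.toSimpleFunc s with hsf
    have hae : ⇑sf =ᵐ[μ] ⇑(s : Lp ℝ 1 μ) := Lp.simpleFunc.toSimpleFunc_eq_toFun s
    obtain ⟨C, hC⟩ := sf.exists_forall_norm_le
    have hmem2 : MemLp (⇑sf) 2 μ :=
      MemLp.of_bound sf.aestronglyMeasurable C (Filter.Eventually.of_forall hC)
    set f2 : Lp ℝ 2 μ := hmem2.toLp sf with hf2
    have heq : inclL f2 = (s : Lp ℝ 1 μ) := by
      refine Lp.ext ?_
      have h1 : ⇑(inclL f2) =ᵐ[μ] ⇑f2 := inclL_coe f2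
      have h2 : ⇑f2 =ᵐ[μ] ⇑sf := hmem2.coeFn_toLp
      exact h1.trans (h2.trans hae)
    rw [← heq]
    exact hkey f2
  have hφR : (φ : Lp ℝ 1 μ → ℝ) = R := by
    refine Continuous.ext_on (Lp.simpleFunc.dense (ENNReal.one_ne_top)) φ.continuous R.continuous ?_
    intro x hx
    exact hsimple ⟨x, hx⟩
  refine ⟨Y, Ysm, fun x => by rw [hc] at Ybd ⊢; exact Ybd x, fun f => ?_⟩
  have := congrFun hφR f
  exact this
end Rep

section Main
variable {X : Type*} {m : MeasurableSpace X} {Θ : Type*}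
  (P0 : Measure X) [IsProbabilityMeasure P0]
  (P : Θ → Measure X) [∀ θ, IsProbabilityMeasure (P θ)]
  (B0 : MeasurableSpace X)

lemma key_identity (hac : ∀ θ, P θ ≪ P0) (hB0 : B0 ≤ m) (θ : Θ)
    {Y : X → ℝ} (hYsm : StronglyMeasurable[B0] Y) {M : ℝ} (hbd : ∀ᵐ x ∂P0, |Y x| ≤ M) :
    ∫ x, Y x * (P0[fun x => ((P θ).rnDeriv P0 x).toReal | B0]) x ∂P0 = ∫ x, Y x ∂(P θ) := by
  haveI : SigmaFinite (P0.trim hB0) := inferInstance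
  set D : X → ℝ := fun x => ((P θ).rnDeriv P0 x).toReal with hD
  have hDint : Integrable D P0 := Measure.integrable_toReal_rnDeriv
  have hYmeas : AEStronglyMeasurable[m] Y P0 := (hYsm.mono hB0).aestronglyMeasurable
  have hYD : Integrable (Y * D) P0 :=
    hDint.bdd_mul hYmeas (hbd.mono fun x hx => by simpa using hx)
  have hpull : P0[Y * D|B0] =ᵐ[P0] Y * P0[D|B0] :=
    condExp_mul_of_stronglyMeasurable_left hYsm hYD hDint
  have h1 : ∫ x, Y x * (P0[D|B0]) x ∂P0 = ∫ x, (P0[Y * D|B0]) x ∂P0 := by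
    refine (integral_congr_ae ?_).symm
    filter_upwards [hpull] with x hx
    rw [hx, Pi.mul_apply]
  have h2 : ∫ x, (P0[Y * D|B0]) x ∂P0 = ∫ x, (Y * D) x ∂P0 := integral_condExp hB0
  have h3 : ∫ x, (Y * D) x ∂P0 = ∫ x, Y x ∂(P θ) := by
    rw [← integral_rnDeriv_smul (hac θ) (f := Y)]
    refine integral_congr_ae (Filter.Eventually.of_forall fun x => ?_)
    simp [hD, smul_eq_mul, mul_comm]
  rw [h1, h2, h3]

lemma span_props (hac : ∀ θ, P θ ≪ P0) (hB0 : B0 ≤ m)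
    {Y : X → ℝ} (hYsm : StronglyMeasurable[B0] Y) {M : ℝ} (hbd : ∀ᵐ x ∂P0, |Y x| ≤ M)
    (hzero : ∀ θ, ∫ x, Y x ∂(P θ) = 0)
    {g : X → ℝ}
    (hg : g ∈ Submodule.span ℝ
      {h : X → ℝ | ∃ θ : Θ, h = P0[fun x => ((P θ).rnDeriv P0 x).toReal | B0]}) :
    StronglyMeasurable[B0] g ∧ Integrable g P0 ∧ ∫ x, Y x * g x ∂P0 = 0 := by
  have hYmeas : AEStronglyMeasurable[m] Y P0 := (hYsm.mono hB0).aestronglyMeasurable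
  have habs : ∀ᵐ x ∂P0, ‖Y x‖ ≤ M := hbd.mono fun x hx => by simpa using hx
  induction hg using Submodule.span_induction with
  | mem h hh =>
    obtain ⟨θ, rfl⟩ := hh
    exact ⟨stronglyMeasurable_condExp, integrable_condExp,
      (key_identity P0 P B0 hac hB0 θ hYsm hbd).trans (hzero θ)⟩
  | zero =>
    exact ⟨stronglyMeasurable_const, integrable_zero _ _ _, by simp⟩
  | add g₁ g₂ hg₁ hg₂ ih₁ ih₂ =>
    obtain ⟨sm₁, int₁, z₁⟩ := ih₁
    obtain ⟨sm₂, int₂, z₂⟩ := ih₂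
    refine ⟨sm₁.add sm₂, int₁.add int₂, ?_⟩
    have e : ∀ᵐ x ∂P0, Y x * (g₁ + g₂) x = Y x * g₁ x + Y x * g₂ x :=
      Filter.Eventually.of_forall fun x => by simp [Pi.add_apply]; ring
    rw [integral_congr_ae e, integral_add (int₁.bdd_mul hYmeas habs)
      (int₂.bdd_mul hYmeas habs), z₁, z₂, add_zero]
  | smul a g₁ hg₁ ih =>
    obtain ⟨sm₁, int₁, z₁⟩ := ih
    refine ⟨sm₁.const_smul a, int₁.smul a, ?_⟩
    have e : ∀ᵐ x ∂P0, Y x * (a • g₁) x = a * (Y x * g₁ x) :=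
      Filter.Eventually.of_forall fun x => by simp [Pi.smul_apply, smul_eq_mul]; ring
    rw [integral_congr_ae e, integral_const_mul, z₁, mul_zero]

end Main

/-- Farrell's characterization for a sub-σ-field `B₀`: `B₀` is boundedly complete
iff the span of the conditional likelihood ratios `E_0[dP_θ/dP_0 | B₀]` is dense
in `L¹(B₀, P_0)`. -/
theorem farrell_subfield_boundedly_complete_iff_dense
    {X : Type*} {m : MeasurableSpace X} {Θ : Type*}
    (P0 : Measure X) [IsProbabilityMeasure P0]
    (P : Θ → Measure X) [∀ θ, IsProbabilityMeasure (P θ)]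
    (hac : ∀ θ, P θ ≪ P0)
    (B0 : MeasurableSpace X) (hB0 : B0 ≤ m) :
    (∀ Y : X → ℝ, Measurable[B0] Y → (∃ M : ℝ, ∀ᵐ x ∂P0, |Y x| ≤ M) →
        (∀ θ : Θ, ∫ x, Y x ∂(P θ) = 0) → Y =ᵐ[P0] 0)
      ↔ (∀ f : X → ℝ, Measurable[B0] f → Integrable f P0 → ∀ ε > 0,
          ∃ g ∈ Submodule.span ℝ
            {h : X → ℝ | ∃ θ : Θ,
              h = P0[fun x => ((P θ).rnDeriv P0 x).toReal | B0]},
            ∫ x, |f x - g x| ∂P0 < ε) := by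
  constructor
  · -- bounded completeness → density
    intro hcomp f hfmeas hfint ε hε
    by_contra hno
    push_neg at hno
    -- hno : ∀ g ∈ span, ε ≤ ∫ |f - g| ∂P0
    set μ : Measure X := P0.trim hB0 with hμdef
    haveI : IsProbabilityMeasure μ :=
      ⟨by rw [hμdef, trim_measurableSet_eq hB0 MeasurableSet.univ]; exact measure_univ⟩
    have hfsm : StronglyMeasurable[B0] f := hfmeas.stronglyMeasurable
    have hfintμ : Integrable f μ := hfint.trim hB0 hfsm
    have hcdint : ∀ θ : Θ,
        Integrable (P0[fun x => ((P θ).rnDeriv P0 x).toReal | B0]) μ := fun θ =>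
      Integrable.trim hB0 integrable_condExp stronglyMeasurable_condExp
    set L : Θ → Lp ℝ 1 μ := fun θ => (hcdint θ).toL1 _ with hLdef
    set T : Submodule ℝ (Lp ℝ 1 μ) := Submodule.span ℝ (Set.range L) with hTdef
    set F : Lp ℝ 1 μ := hfintμ.toL1 f with hFdef
    have hrep : ∀ G : Lp ℝ 1 μ, G ∈ T → ∃ g, g ∈ Submodule.span ℝ
        {h : X → ℝ | ∃ θ : Θ, h = P0[fun x => ((P θ).rnDeriv P0 x).toReal | B0]} ∧
        StronglyMeasurable[B0] g ∧ Integrable g μ ∧ ⇑G =ᵐ[μ] g := by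
      intro G hGT
      induction hGT using Submodule.span_induction with
        | mem h hh =>
          obtain ⟨θ, rfl⟩ := hh
          exact ⟨P0[fun x => ((P θ).rnDeriv P0 x).toReal | B0],
            Submodule.subset_span ⟨θ, rfl⟩, stronglyMeasurable_condExp, hcdint θ,
            (hcdint θ).coeFn_toL1⟩
        | zero =>
          exact ⟨0, Submodule.zero_mem _, stronglyMeasurable_const,
            integrable_zero _ _ _, Lp.coeFn_zero _ _ _⟩
        | add x y hx hy ihx ihy =>
          obtain ⟨g₁, m₁, s₁, i₁, e₁⟩ := ihx
          obtain ⟨g₂, m₂, s₂, i₂, e₂⟩ := ihy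
          refine ⟨g₁ + g₂, Submodule.add_mem _ m₁ m₂, s₁.add s₂, i₁.add i₂, ?_⟩
          refine (Lp.coeFn_add x y).trans ?_
          filter_upwards [e₁, e₂] with t h1 h2
          simp [Pi.add_apply, h1, h2]
        | smul a x hx ih =>
          obtain ⟨g₁, m₁, s₁, i₁, e₁⟩ := ih
          refine ⟨a • g₁, Submodule.smul_mem _ a m₁, s₁.const_smul a, i₁.smul a, ?_⟩
          refine (Lp.coeFn_smul a x).trans ?_
          filter_upwards [e₁] with t h1
          simp [Pi.smul_apply, h1]
    have hFnot : F ∉ closure (T : Set (Lp ℝ 1 μ)) := by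
      intro hmem
      obtain ⟨G, hGT, hdist⟩ := Metric.mem_closure_iff.mp hmem ε hε
      obtain ⟨g, hgspan, gsm, gintμ, hGg⟩ := hrep G hGT
      have h1 : dist F G = ∫ x, ‖(F - G : Lp ℝ 1 μ) x‖ ∂μ := by
        rw [dist_eq_norm, MeasureTheory.L1.norm_eq_integral_norm]
      have h2 : ∫ x, ‖(F - G : Lp ℝ 1 μ) x‖ ∂μ = ∫ x, |f x - g x| ∂μ := by
        refine integral_congr_ae ?_
        filter_upwards [Lp.coeFn_sub F G, hfintμ.coeFn_toL1, hGg] with x hx hF hG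
        rw [hx, Pi.sub_apply, hF, hG, Real.norm_eq_abs]
      have h3 : ∫ x, |f x - g x| ∂P0 = ∫ x, |f x - g x| ∂μ := by
        refine integral_trim hB0 ?_
        have : StronglyMeasurable[B0] fun x => ‖f x - g x‖ := (hfsm.sub gsm).norm
        simpa [Real.norm_eq_abs] using this
      have := hno g hgspan
      rw [h3, ← h2, ← h1] at this
      linarith
    obtain ⟨φ, u, hφu, hφF⟩ := geometric_hahn_banach_closed_point
      (T.convex.closure) isClosed_closure hFnot
    have hφ0 : ∀ G ∈ T, φ G = 0 := by
      intro G hGT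
      by_contra hne
      have h1 : φ ((((u + 1) / φ G)) • G) = u + 1 := by
        rw [_root_.map_smul, smul_eq_mul, div_mul_cancel₀ _ hne]
      have h2 := hφu _ (subset_closure (T.smul_mem ((u + 1) / φ G) hGT))
      rw [h1] at h2
      linarith
    have hu0 : 0 < u := by
      have := hφu 0 (subset_closure T.zero_mem)
      simpa using this
    have hφFpos : 0 < φ F := lt_trans hu0 hφF
    obtain ⟨Y, Ysm, Ybd, hYrep⟩ := l1_dual_rep μ φ
    have hYzero : ∀ θ, ∫ x, Y x ∂(P θ) = 0 := by
      intro θ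
      have e1 : ∫ x, Y x ∂(P θ)
          = ∫ x, Y x * (P0[fun x => ((P θ).rnDeriv P0 x).toReal | B0]) x ∂P0 :=
        (key_identity P0 P B0 hac hB0 θ Ysm
          (Filter.Eventually.of_forall Ybd)).symm
      have e2 : ∫ x, Y x * (P0[fun x => ((P θ).rnDeriv P0 x).toReal | B0]) x ∂P0
          = ∫ x, Y x * (P0[fun x => ((P θ).rnDeriv P0 x).toReal | B0]) x ∂μ :=
        integral_trim hB0 (Ysm.mul stronglyMeasurable_condExp)
      have e3 : ∫ x, Y x * (P0[fun x => ((P θ).rnDeriv P0 x).toReal | B0]) x ∂μ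
          = ∫ x, Y x * (L θ) x ∂μ := by
        refine integral_congr_ae ?_
        filter_upwards [(hcdint θ).coeFn_toL1] with x hx
        rw [hLdef]
        simp only
        rw [hx]
      have e4 : ∫ x, Y x * (L θ) x ∂μ = φ (L θ) := (hYrep (L θ)).symm
      have e5 : φ (L θ) = 0 := hφ0 _ (Submodule.subset_span ⟨θ, rfl⟩)
      rw [e1, e2, e3, e4, e5]
    have hY0 : Y =ᵐ[P0] 0 :=
      hcomp Y Ysm.measurable ⟨‖φ‖, Filter.Eventually.of_forall Ybd⟩ hYzero
    have hY0μ : Y =ᵐ[μ] 0 := by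
      have hset : MeasurableSet[B0] {x | ¬ Y x = (0 : ℝ)} :=
        (Ysm.measurable (measurableSet_singleton (0 : ℝ))).compl
      have hP0 : P0 {x | ¬ Y x = (0 : ℝ)} = 0 := by
        have h := hY0
        rw [Filter.EventuallyEq, ae_iff] at h
        simpa using h
      rw [Filter.EventuallyEq, ae_iff]
      simp only [Pi.zero_apply]
      rw [hμdef, trim_measurableSet_eq hB0 hset]
      exact hP0
    have hφF0 : φ F = 0 := by
      rw [hYrep F]
      have : ∀ᵐ x ∂μ, Y x * F x = 0 := by
        filter_upwards [hY0μ] with x hx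
        rw [hx]
        simp
      rw [integral_congr_ae this, integral_zero]
    linarith

  · -- density → bounded completeness
    intro hdense Y hYmeas hbd hzero
    obtain ⟨M, hM⟩ := hbd
    set M' : ℝ := max M 0 + 1 with hM'
    have hM'pos : 0 < M' := by positivity
    have hbd' : ∀ᵐ x ∂P0, |Y x| ≤ M' := by
      filter_upwards [hM] with x hx
      have : M ≤ M' := by rw [hM']; have := le_max_left M 0; linarith
      linarith
    have hYsm : StronglyMeasurable[B0] Y := hYmeas.stronglyMeasurable
    have hYmeas' : AEStronglyMeasurable[m] Y P0 := (hYsm.mono hB0).aestronglyMeasurable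
    have habs : ∀ᵐ x ∂P0, ‖Y x‖ ≤ M' := hbd'.mono fun x hx => by simpa using hx
    have hYint : Integrable Y P0 := Integrable.mono' (integrable_const M') hYmeas' habs
    have hYY : Integrable (fun x => Y x * Y x) P0 := hYint.bdd_mul hYmeas' habs
    have key : ∀ ε > 0, ∫ x, Y x * Y x ∂P0 ≤ M' * ε := by
      intro ε hε
      obtain ⟨g, hgspan, hgε⟩ := hdense Y hYmeas hYint ε hε
      obtain ⟨gsm, gint, gzero⟩ := span_props P0 P B0 hac hB0 hYsm hbd' hzero hgspan
      have hYg : Integrable (fun x => Y x * g x) P0 := gint.bdd_mul hYmeas' habs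
      have hfg_int : Integrable (fun x => Y x * (Y x - g x)) P0 :=
        (hYint.sub gint).bdd_mul hYmeas' habs
      have e1 : ∫ x, Y x * Y x ∂P0 = ∫ x, Y x * (Y x - g x) ∂P0 := by
        have h : ∀ x, Y x * Y x = Y x * (Y x - g x) + Y x * g x := fun x => by ring
        rw [integral_congr_ae (Filter.Eventually.of_forall h),
          integral_add hfg_int hYg, gzero, add_zero]
      have e2 : ∫ x, Y x * (Y x - g x) ∂P0 ≤ M' * ε := by
        have s1 : ∫ x, Y x * (Y x - g x) ∂P0 ≤ |∫ x, Y x * (Y x - g x) ∂P0| := le_abs_self _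
        have s2 : |∫ x, Y x * (Y x - g x) ∂P0| ≤ ∫ x, |Y x| * |Y x - g x| ∂P0 := by
          simpa [Real.norm_eq_abs, abs_mul] using
            norm_integral_le_integral_norm (μ := P0) (fun x => Y x * (Y x - g x))
        have s3 : ∫ x, |Y x| * |Y x - g x| ∂P0 ≤ ∫ x, M' * |Y x - g x| ∂P0 := by
          refine integral_mono_ae ?_ ((hYint.sub gint).abs.const_mul M') ?_
          · have := hfg_int.abs
            refine this.congr (Filter.Eventually.of_forall fun x => ?_)
            simp [abs_mul]
          filter_upwards [hbd'] with x hx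
          exact mul_le_mul_of_nonneg_right hx (abs_nonneg _)
        have s4 : ∫ x, M' * |Y x - g x| ∂P0 = M' * ∫ x, |Y x - g x| ∂P0 :=
          integral_const_mul _ _
        have s5 : M' * ∫ x, |Y x - g x| ∂P0 ≤ M' * ε :=
          mul_le_mul_of_nonneg_left hgε.le hM'pos.le
        linarith
      linarith [e1 ▸ e2]
    have hY2 : ∫ x, Y x * Y x ∂P0 ≤ 0 := by
      by_contra hpos
      push_neg at hpos
      have h := key ((∫ x, Y x * Y x ∂P0) / (2 * M')) (by positivity)
      have he : M' * ((∫ x, Y x * Y x ∂P0) / (2 * M')) = (∫ x, Y x * Y x ∂P0) / 2 := by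
        field_simp
      rw [he] at h
      linarith
    have hY2' : ∫ x, Y x * Y x ∂P0 = 0 :=
      le_antisymm hY2 (integral_nonneg fun x => mul_self_nonneg _)
    have hz := (integral_eq_zero_iff_of_nonneg_ae
      (Filter.Eventually.of_forall fun x => mul_self_nonneg (Y x)) hYY).mp hY2'
    filter_upwards [hz] with x hx
    exact mul_self_eq_zero.mp hx
end

section
/- Let (X, B, P_0) be a probability space, {P_θ : θ ∈ Θ} a family of probability measures each absolutely continuous w.r.t. P_0, B_0 ⊆ B a sub-σ-field, and (F_k)_{k∈ℕ} an increasing sequence of sub-σ-fields with F_k ⊆ F_{k+1} ⊆ B_0 and σ(⋃_k F_k) = B_0. Assume for every k that S_{F_k} ⊆ S_{B_0}, where S_G = span{E_0[dP_θ/dP_0 | G] : θ ∈ Θ}. Then B_0 is boundedly complete if and only if each F_k is boundedly complete. -/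
open MeasureTheory Filter Topology

/-- Proposition 2: given a convergent filtration `(F_k)` in `B₀` whose spans of
conditional likelihood ratios are contained (up to a.e. equality) in that of `B₀`,
the sub-σ-field `B₀` is boundedly complete iff each `F_k` is. -/
theorem boundedly_complete_iff_filtration
    {X : Type*} {m : MeasurableSpace X} {Θ : Type*}
    (P0 : Measure X) [IsProbabilityMeasure P0]
    (P : Θ → Measure X) [∀ θ, IsProbabilityMeasure (P θ)]
    (hac : ∀ θ, P θ ≪ P0)
    (B0 : MeasurableSpace X) (hB0 : B0 ≤ m)
    (F : ℕ → MeasurableSpace X) (hFmono : Monotone F)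
    (hFle : ∀ k, F k ≤ B0) (hFgen : (⨆ k, F k) = B0)
    (hspan : ∀ k : ℕ, ∀ g ∈ Submodule.span ℝ
        {h : X → ℝ | ∃ θ : Θ,
          h = P0[fun x => ((P θ).rnDeriv P0 x).toReal | F k]},
      ∃ g' ∈ Submodule.span ℝ
        {h : X → ℝ | ∃ θ : Θ,
          h = P0[fun x => ((P θ).rnDeriv P0 x).toReal | B0]},
        g =ᵐ[P0] g') :
    (∀ Y : X → ℝ, Measurable[B0] Y → (∃ M : ℝ, ∀ᵐ x ∂P0, |Y x| ≤ M) →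
        (∀ θ : Θ, ∫ x, Y x ∂(P θ) = 0) → Y =ᵐ[P0] 0)
      ↔ (∀ k : ℕ, ∀ Y : X → ℝ, Measurable[F k] Y →
          (∃ M : ℝ, ∀ᵐ x ∂P0, |Y x| ≤ M) →
          (∀ θ : Θ, ∫ x, Y x ∂(P θ) = 0) → Y =ᵐ[P0] 0) := by
  constructor
  · -- easy direction: each `Y` that is `F k`-measurable is `B0`-measurable
    intro hB0c k Y hY hbdd hint
    exact hB0c Y (hY.mono (hFle k) le_rfl) hbdd hint
  · -- hard direction
    intro hFc Y hYmeas hYbdd hYint0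
    obtain ⟨M, hM⟩ := hYbdd
    have hYsm : StronglyMeasurable[B0] Y := hYmeas.stronglyMeasurable
    have hYaesm : AEStronglyMeasurable[m] Y P0 :=
      ((hYsm.mono hB0).aestronglyMeasurable)
    have hMnorm : ∀ᵐ x ∂P0, ‖Y x‖ ≤ M := by
      filter_upwards [hM] with x hx using by simpa [Real.norm_eq_abs] using hx
    have hYint : Integrable Y P0 :=
      Integrable.mono' (integrable_const M) hYaesm hMnorm
    haveI hsfB0 : SigmaFinite (P0.trim hB0) := by infer_instance
    haveI hsfF : ∀ k, SigmaFinite (P0.trim ((hFle k).trans hB0)) := fun k => by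
      infer_instance
    set D : Θ → X → ℝ := fun θ x => ((P θ).rnDeriv P0 x).toReal with hD
    have hDint : ∀ θ, Integrable (D θ) P0 := fun θ =>
      Measure.integrable_toReal_rnDeriv
    -- integration against `P θ` is integration against the density
    have hintP : ∀ (f : X → ℝ) (θ : Θ),
        ∫ x, f x ∂(P θ) = ∫ x, D θ x * f x ∂P0 := by
      intro f θ
      rw [← integral_rnDeriv_smul (hac θ) (f := f)]
      simp [hD, smul_eq_mul]
    -- `Y` integrates to zero against the `B0`-conditional densities
    have hgen : ∀ θ : Θ, ∫ x, Y x * (P0[D θ | B0]) x ∂P0 = 0 := by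
      intro θ
      have hYD : Integrable (Y * D θ) P0 :=
        (hDint θ).bdd_mul hYaesm hMnorm
      have hmul : P0[Y * D θ | B0] =ᵐ[P0] Y * P0[D θ | B0] :=
        condExp_mul_of_stronglyMeasurable_left hYsm hYD (hDint θ)
      calc ∫ x, Y x * (P0[D θ | B0]) x ∂P0
          = ∫ x, (P0[Y * D θ | B0]) x ∂P0 := (integral_congr_ae hmul).symm
        _ = ∫ x, (Y * D θ) x ∂P0 := integral_condExp hB0
        _ = ∫ x, D θ x * Y x ∂P0 := by simp [Pi.mul_apply, mul_comm]
        _ = ∫ x, Y x ∂(P θ) := (hintP Y θ).symm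
        _ = 0 := hYint0 θ
    -- extend by linearity to the span
    have hspan0 : ∀ g ∈ Submodule.span ℝ
        {h : X → ℝ | ∃ θ : Θ, h = P0[D θ | B0]},
        Integrable (fun x => Y x * g x) P0 ∧ ∫ x, Y x * g x ∂P0 = 0 := by
      intro g hg
      induction hg using Submodule.span_induction with
      | mem h hh =>
        obtain ⟨θ, rfl⟩ := hh
        exact ⟨integrable_condExp.bdd_mul hYaesm hMnorm, hgen θ⟩
      | zero => simp
      | add f g hf hg ihf ihg =>
        obtain ⟨hf1, hf2⟩ := ihf
        obtain ⟨hg1, hg2⟩ := ihg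
        constructor
        · have h := hf1.add hg1; simp only [Pi.add_apply, mul_add]; exact h
        · have : ∫ x, Y x * (f + g) x ∂P0
              = ∫ x, (Y x * f x + Y x * g x) ∂P0 := by
            simp [Pi.add_apply, mul_add]
          rw [this, integral_add hf1 hg1, hf2, hg2, add_zero]
      | smul c f hf ihf =>
        obtain ⟨hf1, hf2⟩ := ihf
        constructor
        · simpa [Pi.smul_apply, smul_eq_mul, mul_left_comm] using hf1.const_mul c
        · have : ∫ x, Y x * (c • f) x ∂P0
              = ∫ x, c * (Y x * f x) ∂P0 := by
            simp [Pi.smul_apply, smul_eq_mul, mul_left_comm]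
          rw [this, integral_const_mul c, hf2, mul_zero]
    -- each conditional expectation `P0[Y | F k]` vanishes a.e.
    have hZ : ∀ k : ℕ, (P0[Y | F k]) =ᵐ[P0] 0 := by
      intro k
      set Z : X → ℝ := P0[Y | F k] with hZdef
      have hZsm : StronglyMeasurable[F k] Z := stronglyMeasurable_condExp
      have hZbdd : ∀ᵐ x ∂P0, |Z x| ≤ (M.toNNReal : ℝ) := by
        refine ae_bdd_condExp_of_ae_bdd (R := M.toNNReal) ?_
        filter_upwards [hM] with x hx using hx.trans (Real.le_coe_toNNReal M)
      have hZnorm : ∀ᵐ x ∂P0, ‖Z x‖ ≤ (M.toNNReal : ℝ) := by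
        filter_upwards [hZbdd] with x hx using by
          simpa [Real.norm_eq_abs] using hx
      have hZaesm : AEStronglyMeasurable[m] Z P0 :=
        ((hZsm.mono ((hFle k).trans hB0)).aestronglyMeasurable)
      refine hFc k Z hZsm.measurable ⟨(M.toNNReal : ℝ), hZbdd⟩ ?_
      intro θ
      set W : X → ℝ := P0[D θ | F k] with hWdef
      have hWsm : StronglyMeasurable[F k] W := stronglyMeasurable_condExp
      have hZD : Integrable (Z * D θ) P0 :=
        (hDint θ).bdd_mul hZaesm hZnorm
      have hWY : Integrable (W * Y) P0 := by
        have := integrable_condExp (μ := P0) (f := D θ) (m := F k)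
          |>.bdd_mul hYaesm hMnorm
        exact this.congr (Eventually.of_forall fun x => mul_comm _ _)
      have hmul1 : P0[Z * D θ | F k] =ᵐ[P0] Z * W :=
        condExp_mul_of_stronglyMeasurable_left hZsm hZD (hDint θ)
      have hmul2 : P0[W * Y | F k] =ᵐ[P0] W * Z :=
        condExp_mul_of_stronglyMeasurable_left hWsm hWY hYint
      obtain ⟨g', hg'mem, hg'ae⟩ := hspan k W
        (Submodule.subset_span ⟨θ, rfl⟩)
      calc ∫ x, Z x ∂(P θ)
          = ∫ x, D θ x * Z x ∂P0 := hintP Z θ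
        _ = ∫ x, (Z * D θ) x ∂P0 := by simp [Pi.mul_apply, mul_comm]
        _ = ∫ x, (P0[Z * D θ | F k]) x ∂P0 :=
            (integral_condExp ((hFle k).trans hB0)).symm
        _ = ∫ x, (Z * W) x ∂P0 := integral_congr_ae hmul1
        _ = ∫ x, (W * Y) x ∂P0 := by
            rw [show ∫ x, (W * Y) x ∂P0 = ∫ x, (P0[W * Y | F k]) x ∂P0 from
              (integral_condExp ((hFle k).trans hB0)).symm,
              integral_congr_ae hmul2]
            simp [Pi.mul_apply, mul_comm]
        _ = ∫ x, Y x * g' x ∂P0 := by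
            refine integral_congr_ae ?_
            filter_upwards [hg'ae] with x hx
            simp [Pi.mul_apply, hx, mul_comm]
        _ = 0 := (hspan0 g' hg'mem).2
    -- martingale convergence
    let ℱ : Filtration ℕ m := ⟨F, hFmono, fun k => (hFle k).trans hB0⟩
    have hYsm' : StronglyMeasurable[⨆ n, ℱ n] Y := by
      have : (⨆ n, ℱ n) = B0 := hFgen
      rw [this]; exact hYsm
    have htend := hYint.tendsto_ae_condExp (ℱ := ℱ) hYsm'
    have hZ0 : ∀ᵐ x ∂P0, ∀ k : ℕ, (P0[Y | F k]) x = 0 :=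
      ae_all_iff.2 fun k => hZ k
    filter_upwards [htend, hZ0] with x hx h0
    have h1 : Tendsto (fun _ : ℕ => (0 : ℝ)) atTop (𝓝 (Y x)) := by
      have : (fun n : ℕ => (P0[Y | ℱ n]) x) = fun _ : ℕ => (0 : ℝ) := by
        funext n; exact h0 n
      rwa [this] at hx
    have := tendsto_nhds_unique h1 tendsto_const_nhds
    simpa using this
end
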